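/- For all integers n ≥ 0 and k ≥ 1, the cardinality of RA_{n+2,k} equals (n−k+2)·B̃(n,k−1). -/

import Mathlib

open Finset

/-- The number of ascents of a permutation of `{1, …, m+1}`. -/
def asc {m : ℕ} (π : Equiv.Perm (Fin (m + 1))) : ℕ :=
  (Finset.univ.filter fun i : Fin m => π i.castSucc < π i.succ).card

/-- The set `𝒬_{m+1}` of permutations of `{1, …, m+1}` whose largest entry appears
as the first descent (the identity permutation is included). -/
def Qset (m : ℕ) : Finset (Equiv.Perm (Fin (m + 1))) :=
  Finset.univ.filter fun π =>
    ∀ i : Fin m, i.succ ≤ π⁻¹ (Fin.last m) → π i.castSucc < π i.succ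

/-- `B̃(n,k)`: the number of permutations in `𝒬_{n+1}` with exactly `k` ascents. -/
def Btil (n k : ℕ) : ℕ := ((Qset n).filter fun π => asc π = k).card

/-- With `a = π⁻¹(1)` (smallest entry is `0 : Fin (m+1)`, positions `0`-indexed):
either `a` is the first position, or `a` is interior and `π(a-1) > π(a+1)`. -/
def raCond {m : ℕ} (π : Equiv.Perm (Fin (m + 1))) : Prop :=
  π⁻¹ 0 = 0 ∨ ∃ j : ℕ, ∃ h : j + 2 ≤ m,
    (π⁻¹ 0 : ℕ) = j + 1 ∧ π ⟨j + 2, by omega⟩ < π ⟨j, by omega⟩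

open scoped Classical in
/-- `RA_{m+1,k}`: permutations `π` of `{1, …, m+1}` with `π ∈ 𝒬_{m+1}`, `asc π = k`,
and, with `a = π⁻¹(1)`, either `a = 1` or `π(a-1) > π(a+1)`. -/
noncomputable def RA (m k : ℕ) : Finset (Equiv.Perm (Fin (m + 1))) :=
  (Qset m).filter fun π => asc π = k ∧ raCond π

open Finset Equiv

section Aux

def ins {n : ℕ} (σ : Equiv.Perm (Fin (n+1))) (a : Fin (n+2)) : Equiv.Perm (Fin (n+2)) :=
  ((finSuccEquiv' a).trans (Equiv.optionCongr σ)).trans (finSuccEquiv' (0 : Fin (n+2))).symm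

lemma ins_at {n : ℕ} (σ : Equiv.Perm (Fin (n+1))) (a : Fin (n+2)) : ins σ a a = 0 := by
  simp [ins]

lemma ins_succAbove {n : ℕ} (σ : Equiv.Perm (Fin (n+1))) (a : Fin (n+2)) (i : Fin (n+1)) :
    ins σ a (a.succAbove i) = (σ i).succ := by
  simp [ins, Fin.zero_succAbove]

noncomputable def del {n : ℕ} (π : Equiv.Perm (Fin (n+2))) : Equiv.Perm (Fin (n+1)) :=
  (((finSuccEquiv' (π⁻¹ 0)).symm.trans π).trans (finSuccEquiv' (0 : Fin (n+2)))).removeNone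

lemma del_spec {n : ℕ} (π : Equiv.Perm (Fin (n+2))) (i : Fin (n+1)) :
    π ((π⁻¹ 0).succAbove i) = ((del π) i).succ := by
  have hne : π ((π⁻¹ 0).succAbove i) ≠ 0 := by
    intro h
    have := π.injective (h.trans (Equiv.apply_symm_apply π 0).symm)
    exact Fin.succAbove_ne _ i this
  obtain ⟨j, hj⟩ : ∃ j : Fin (n+1), π ((π⁻¹ 0).succAbove i) = j.succ :=
    ⟨(π _).pred hne, (Fin.succ_pred _ _).symm⟩
  set e := (((finSuccEquiv' (π⁻¹ 0)).symm.trans π).trans (finSuccEquiv' (0 : Fin (n+2)))) with he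
  have h1 : e (some i) = some j := by
    simp only [he, Equiv.trans_apply, finSuccEquiv'_symm_some, hj]
    rw [← Fin.zero_succAbove, finSuccEquiv'_succAbove]
  have h2 := Equiv.removeNone_some e ⟨j, h1⟩
  rw [h1] at h2
  have : del π i = j := Option.some_injective _ h2
  rw [this, hj]

lemma perm_ext_succAbove {n : ℕ} (π₁ π₂ : Equiv.Perm (Fin (n+2))) (a : Fin (n+2))
    (h0 : π₁ a = π₂ a) (h : ∀ i, π₁ (a.succAbove i) = π₂ (a.succAbove i)) : π₁ = π₂ :=
  Equiv.ext fun x => Fin.succAboveCases a h0 h x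

lemma ins_inv_zero {n : ℕ} (σ : Equiv.Perm (Fin (n+1))) (a : Fin (n+2)) :
    (ins σ a)⁻¹ 0 = a := by
  rw [← ins_at σ a, (by exact Equiv.symm_apply_apply (ins σ a) a : (ins σ a)⁻¹ (ins σ a a) = a)]

lemma ins_del {n : ℕ} (π : Equiv.Perm (Fin (n+2))) : ins (del π) (π⁻¹ 0) = π := by
  apply perm_ext_succAbove _ _ (π⁻¹ 0)
  · rw [ins_at, (by exact Equiv.apply_symm_apply π 0 : π (π⁻¹ 0) = 0)]
  · intro i
    rw [ins_succAbove, del_spec]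

lemma del_ins {n : ℕ} (σ : Equiv.Perm (Fin (n+1))) (a : Fin (n+2)) : del (ins σ a) = σ := by
  apply Equiv.ext
  intro i
  have h1 := del_spec (ins σ a) i
  rw [ins_inv_zero] at h1
  rw [ins_succAbove] at h1
  exact Fin.succ_injective _ h1.symm

lemma ins_lt {n : ℕ} (σ : Equiv.Perm (Fin (n+1))) (a : Fin (n+2)) (p : ℕ) (hp : p < n+1)
    (h : p < (a : ℕ)) : ins σ a ⟨p, by omega⟩ = (σ ⟨p, hp⟩).succ := by
  have hs : a.succAbove ⟨p, hp⟩ = ⟨p, by omega⟩ := by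
    rw [Fin.succAbove_of_castSucc_lt _ _ (by simp [Fin.lt_def]; exact h)]
    rfl
  rw [← hs, ins_succAbove]

lemma ins_ge {n : ℕ} (σ : Equiv.Perm (Fin (n+1))) (a : Fin (n+2)) (p : ℕ) (hp : p < n+1)
    (h : (a : ℕ) ≤ p) : ins σ a ⟨p+1, by omega⟩ = (σ ⟨p, hp⟩).succ := by
  have hs : a.succAbove ⟨p, hp⟩ = ⟨p+1, by omega⟩ := by
    rw [Fin.succAbove_of_le_castSucc _ _ (by simp [Fin.le_def]; exact h)]
    rfl
  rw [← hs, ins_succAbove]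

def validCond {n : ℕ} (σ : Equiv.Perm (Fin (n+1))) (a : Fin (n+2)) : Prop :=
  (a : ℕ) = 0 ∨ ∃ j : ℕ, ∃ h : j + 2 ≤ n + 1,
    (a : ℕ) = j + 1 ∧ σ ⟨j+1, by omega⟩ < σ ⟨j, by omega⟩

lemma ins_maxpos {n : ℕ} (σ : Equiv.Perm (Fin (n+1))) (a : Fin (n+2)) :
    (ins σ a)⁻¹ (Fin.last (n+1)) = a.succAbove (σ⁻¹ (Fin.last n)) := by
  have h : ins σ a (a.succAbove (σ⁻¹ (Fin.last n))) = Fin.last (n+1) := by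
    rw [ins_succAbove, (by exact Equiv.apply_symm_apply σ (Fin.last n) : σ (σ⁻¹ (Fin.last n)) = Fin.last n), Fin.succ_last]
  rw [← h, (by exact Equiv.symm_apply_apply (ins σ a) (a.succAbove (σ⁻¹ (Fin.last n))) :
    (ins σ a)⁻¹ (ins σ a (a.succAbove (σ⁻¹ (Fin.last n)))) = a.succAbove (σ⁻¹ (Fin.last n)))]

lemma mem_Qset_iff {m : ℕ} (σ : Equiv.Perm (Fin (m+1))) :
    σ ∈ Qset m ↔ ∀ i : Fin m, i.succ ≤ σ⁻¹ (Fin.last m) → σ i.castSucc < σ i.succ := by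
  simp [Qset]

lemma ins_castSucc {n : ℕ} (σ : Equiv.Perm (Fin (n+1))) (a : Fin (n+2)) (i : Fin (n+1))
    (h : (i:ℕ) < (a:ℕ)) : ins σ a i.castSucc = (σ i).succ := by
  rw [← Fin.succAbove_of_castSucc_lt a i (by rw [Fin.lt_def]; simpa using h), ins_succAbove]

lemma ins_succ' {n : ℕ} (σ : Equiv.Perm (Fin (n+1))) (a : Fin (n+2)) (i : Fin (n+1))
    (h : (a:ℕ) ≤ (i:ℕ)) : ins σ a i.succ = (σ i).succ := by
  rw [← Fin.succAbove_of_le_castSucc a i (by rw [Fin.le_def]; simpa using h), ins_succAbove]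


lemma asc_ins {n : ℕ} (σ : Equiv.Perm (Fin (n+1))) (a : Fin (n+2))
    (ha : validCond σ a) : asc (ins σ a) = asc σ + 1 := by
  have hA : (a : ℕ) ≤ n := by rcases ha with h | ⟨j, hj, hja, _⟩ <;> omega
  have hset : (Finset.univ.filter fun t : Fin (n+1) => ins σ a t.castSucc < ins σ a t.succ)
      = insert ⟨(a:ℕ), by omega⟩ ((Finset.univ.filter fun s : Fin n => σ s.castSucc < σ s.succ).image
          (fun s : Fin n => if (s:ℕ) < (a:ℕ) then s.castSucc else s.succ)) := by
    ext t
    simp only [mem_filter, mem_univ, true_and, mem_insert, mem_image]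
    constructor
    · intro hlt
      rcases lt_trichotomy (t:ℕ) (a:ℕ) with h | h | h
      · rcases ha with h0 | ⟨j, hj2, hja, hdes⟩
        · omega
        · rcases (show (t:ℕ) + 1 < (a:ℕ) ∨ (t:ℕ) + 1 = (a:ℕ) by omega) with h1 | h1
          · right
            refine ⟨⟨(t:ℕ), by omega⟩, ?_, ?_⟩
            · have e1 : ins σ a t.castSucc = (σ ⟨(t:ℕ), by omega⟩).succ :=
                ins_lt σ a (t:ℕ) (by omega) h
              have e2 : ins σ a t.succ = (σ ⟨(t:ℕ)+1, by omega⟩).succ :=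
                ins_lt σ a ((t:ℕ)+1) (by omega) (by omega)
              rw [e1, e2, Fin.succ_lt_succ_iff] at hlt
              exact hlt
            · simp only [if_pos h]
              exact Fin.ext (by simp)
          · exfalso
            have e2 : t.succ = a := Fin.ext (by simp [h1])
            rw [e2, ins_at] at hlt
            exact Fin.not_lt_zero _ hlt
      · left; exact Fin.ext (by simpa using h)
      · right
        refine ⟨⟨(t:ℕ)-1, by omega⟩, ?_, ?_⟩
        · have ht : t.castSucc = (⟨((t:ℕ)-1)+1, by omega⟩ : Fin (n+2)) := Fin.ext (by simp; omega)
          have e1 : ins σ a t.castSucc = (σ ⟨(t:ℕ)-1, by omega⟩).succ := by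
            rw [ht]; exact ins_ge σ a ((t:ℕ)-1) (by omega) (by omega)
          have e2 : ins σ a t.succ = (σ ⟨(t:ℕ), by omega⟩).succ :=
            ins_ge σ a (t:ℕ) (by omega) (by omega)
          rw [e1, e2, Fin.succ_lt_succ_iff] at hlt
          convert hlt using 2 <;> exact Fin.ext (by simp <;> omega)
        · rw [if_neg (by simp; omega)]
          exact Fin.ext (by simp; omega)
    · rintro (rfl | ⟨s, hs, rfl⟩)
      · have e1 : (⟨(a:ℕ), by omega⟩ : Fin (n+1)).castSucc = a := Fin.ext (by simp)
        have e2 : ins σ a (⟨(a:ℕ), by omega⟩ : Fin (n+1)).succ = (σ ⟨(a:ℕ), by omega⟩).succ :=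
          ins_ge σ a (a:ℕ) (by omega) le_rfl
        rw [e1, ins_at, e2]
        exact Fin.succ_pos _
      · by_cases hsA : (s:ℕ) < (a:ℕ)
        · rw [if_pos hsA]
          have hs1 : (s:ℕ) + 1 < (a:ℕ) := by
            rcases ha with h0 | ⟨j, hj2, hja, hdes⟩
            · omega
            · rcases (show (s:ℕ) + 1 < (a:ℕ) ∨ (s:ℕ) = j by omega) with h1 | h1
              · exact h1
              · exfalso
                have hc : s.castSucc = (⟨j, by omega⟩ : Fin (n+1)) := Fin.ext (by simp [h1])
                have hc2 : s.succ = (⟨j+1, by omega⟩ : Fin (n+1)) := Fin.ext (by simp [h1])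
                rw [hc, hc2] at hs
                exact absurd hs (not_lt_of_gt hdes)
          have e1 : ins σ a s.castSucc.castSucc = (σ s.castSucc).succ :=
            ins_lt σ a (s:ℕ) (by omega) hsA
          have e2 : ins σ a s.castSucc.succ = (σ s.succ).succ :=
            ins_lt σ a ((s:ℕ)+1) (by omega) hs1
          rw [e1, e2, Fin.succ_lt_succ_iff]
          exact hs
        · rw [if_neg hsA]
          have e1 : ins σ a s.succ.castSucc = (σ s.castSucc).succ := by
            have : s.succ.castSucc = (⟨(s:ℕ)+1, by omega⟩ : Fin (n+2)) := rfl
            rw [this]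
            exact ins_ge σ a (s:ℕ) (by omega) (by omega)
          have e2 : ins σ a s.succ.succ = (σ s.succ).succ :=
            ins_ge σ a ((s:ℕ)+1) (by omega) (by omega)
          rw [e1, e2, Fin.succ_lt_succ_iff]
          exact hs
  show (Finset.univ.filter fun t : Fin (n+1) => ins σ a t.castSucc < ins σ a t.succ).card = _
  rw [hset, card_insert_of_notMem, card_image_of_injOn]
  · rfl
  · intro s₁ _ s₂ _ h
    dsimp only at h
    have h' := congrArg Fin.val h
    apply Fin.ext
    split at h' <;> split at h' <;> simp at h' <;> omega
  · intro hmem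
    simp only [mem_image] at hmem
    obtain ⟨s, hs, hse⟩ := hmem
    have h' := congrArg Fin.val hse
    split at h' <;> simp at h' <;> omega

lemma Qset_ins {n : ℕ} (σ : Equiv.Perm (Fin (n+1))) (a : Fin (n+2))
    (ha : validCond σ a) : ins σ a ∈ Qset (n+1) ↔ σ ∈ Qset n := by
  rw [mem_Qset_iff, mem_Qset_iff, ins_maxpos]
  obtain ⟨M, hMdef⟩ : ∃ M, σ⁻¹ (Fin.last n) = M := ⟨_, rfl⟩
  rw [hMdef]
  rcases ha with h0 | ⟨j, hj2, hja, hdes⟩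
  · -- a = 0
    have hsa : ((a.succAbove M : Fin (n+2)) : ℕ) = (M:ℕ) + 1 := by
      rw [Fin.succAbove_of_le_castSucc a M (by rw [Fin.le_def]; simp; omega)]; simp
    constructor
    · intro hQ s hsM
      have hsM' : (s:ℕ) + 1 ≤ (M:ℕ) := by rw [Fin.le_def] at hsM; simpa using hsM
      have h1 := hQ s.succ (by rw [Fin.le_def]; simp [hsa]; omega)
      rw [← Fin.succ_castSucc, ins_succ' σ a s.castSucc (by simp; omega),
        ins_succ' σ a s.succ (by simp; omega), Fin.succ_lt_succ_iff] at h1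
      exact h1
    · intro hQ t htM
      have htM' : (t:ℕ) ≤ (M:ℕ) := by
        rw [Fin.le_def] at htM; rw [hsa] at htM; simp at htM; omega
      rcases Nat.eq_zero_or_pos (t:ℕ) with h1 | h1
      · rw [show t.castSucc = a from Fin.ext (by simp [h0, h1]), ins_at,
          ins_succ' σ a t (by omega)]
        exact Fin.succ_pos _
      · obtain ⟨u, hu⟩ : ∃ u : Fin n, u.succ = t :=
          ⟨⟨(t:ℕ)-1, by omega⟩, Fin.ext (by simp; omega)⟩
        have hu' : (u:ℕ) + 1 = (t:ℕ) := by rw [← hu]; simp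
        have hasc := hQ u (by rw [Fin.le_def]; simp; omega)
        rw [← hu, ← Fin.succ_castSucc, ins_succ' σ a u.castSucc (by simp; omega),
          ins_succ' σ a u.succ (by simp; omega), Fin.succ_lt_succ_iff]
        exact hasc
  · -- a = j + 1, descent at j
    constructor
    · intro hQ s hsM
      have hMlt : (M:ℕ) < (a:ℕ) := by
        by_contra hcon
        push_neg at hcon
        obtain ⟨t0, ht0⟩ : ∃ t0 : Fin (n+1), (t0:ℕ) = j := ⟨⟨j, by omega⟩, rfl⟩
        have h1 := hQ t0 (by
          rw [Fin.le_def, Fin.succAbove_of_le_castSucc a M (by rw [Fin.le_def]; simp; omega)]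
          simp [ht0]; omega)
        rw [show t0.succ = a from Fin.ext (by simp [ht0, hja]), ins_at] at h1
        exact Fin.not_lt_zero _ h1
      have hsa : ((a.succAbove M : Fin (n+2)) : ℕ) = (M:ℕ) := by
        rw [Fin.succAbove_of_castSucc_lt a M (by rw [Fin.lt_def]; simpa using hMlt)]; simp
      have hsM' : (s:ℕ) + 1 ≤ (M:ℕ) := by rw [Fin.le_def] at hsM; simpa using hsM
      have h1 := hQ s.castSucc (by rw [Fin.le_def]; simp [hsa]; omega)
      rw [Fin.succ_castSucc, ins_castSucc σ a s.castSucc (by simp; omega),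
        ins_castSucc σ a s.succ (by simp; omega), Fin.succ_lt_succ_iff] at h1
      exact h1
    · intro hQ t htM
      have hMj : (M:ℕ) ≤ j := by
        by_contra hcon
        push_neg at hcon
        obtain ⟨u, hu⟩ : ∃ u : Fin n, (u:ℕ) = j := ⟨⟨j, by omega⟩, rfl⟩
        have h1 := hQ u (by rw [Fin.le_def]; simp [hu]; omega)
        have h2 : σ u.succ < σ u.castSucc := by
          rw [show u.succ = (⟨j+1, by omega⟩ : Fin (n+1)) from Fin.ext (by simp [hu]),
            show u.castSucc = (⟨j, by omega⟩ : Fin (n+1)) from Fin.ext (by simp [hu])]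
          exact hdes
        exact absurd h1 (asymm h2)
      have hsa : ((a.succAbove M : Fin (n+2)) : ℕ) = (M:ℕ) := by
        rw [Fin.succAbove_of_castSucc_lt a M (by rw [Fin.lt_def]; simp; omega)]; simp
      have htM' : (t:ℕ) + 1 ≤ (M:ℕ) := by
        rw [Fin.le_def] at htM; rw [hsa] at htM; simpa using htM
      obtain ⟨u, hu⟩ : ∃ u : Fin n, u.castSucc = t := ⟨⟨(t:ℕ), by omega⟩, Fin.ext rfl⟩
      have hu' : (u:ℕ) = (t:ℕ) := by rw [← hu]; simp
      have hasc := hQ u (by rw [Fin.le_def]; simp; omega)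
      rw [← hu, Fin.succ_castSucc, ins_castSucc σ a u.castSucc (by simp; omega),
        ins_castSucc σ a u.succ (by simp; omega), Fin.succ_lt_succ_iff]
      exact hasc


open Finset Equiv

lemma raCond_ins {n : ℕ} (σ : Equiv.Perm (Fin (n+1))) (a : Fin (n+2)) :
    raCond (ins σ a) ↔ validCond σ a := by
  simp only [raCond, validCond, ins_inv_zero]
  constructor
  · rintro (h | ⟨j, hj, hja, hlt⟩)
    · left; simp [h]
    · right; refine ⟨j, hj, hja, ?_⟩
      obtain ⟨u, hu⟩ : ∃ u : Fin n, (u:ℕ) = j := ⟨⟨j, by omega⟩, rfl⟩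
      have e1 : ins σ a (⟨j, by omega⟩ : Fin (n+2)) = (σ u.castSucc).succ := by
        rw [show (⟨j, by omega⟩ : Fin (n+2)) = u.castSucc.castSucc from Fin.ext (by simp [hu])]
        exact ins_castSucc σ a u.castSucc (by simp [hu]; omega)
      have e2 : ins σ a (⟨j+2, by omega⟩ : Fin (n+2)) = (σ u.succ).succ := by
        rw [show (⟨j+2, by omega⟩ : Fin (n+2)) = u.succ.succ from Fin.ext (by simp [hu])]
        exact ins_succ' σ a u.succ (by simp [hu]; omega)
      rw [e1, e2, Fin.succ_lt_succ_iff] at hlt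
      have g1 : σ (⟨j+1, by omega⟩ : Fin (n+1)) = σ u.succ := congrArg _ (Fin.ext (by simp [hu]))
      have g2 : σ (⟨j, by omega⟩ : Fin (n+1)) = σ u.castSucc := congrArg _ (Fin.ext (by simp [hu]))
      rw [g1, g2]
      exact hlt
  · rintro (h | ⟨j, hj, hja, hdes⟩)
    · left; exact Fin.ext (by simp [h])
    · right; refine ⟨j, hj, hja, ?_⟩
      obtain ⟨u, hu⟩ : ∃ u : Fin n, (u:ℕ) = j := ⟨⟨j, by omega⟩, rfl⟩
      have e1 : ins σ a (⟨j, by omega⟩ : Fin (n+2)) = (σ u.castSucc).succ := by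
        rw [show (⟨j, by omega⟩ : Fin (n+2)) = u.castSucc.castSucc from Fin.ext (by simp [hu])]
        exact ins_castSucc σ a u.castSucc (by simp [hu]; omega)
      have e2 : ins σ a (⟨j+2, by omega⟩ : Fin (n+2)) = (σ u.succ).succ := by
        rw [show (⟨j+2, by omega⟩ : Fin (n+2)) = u.succ.succ from Fin.ext (by simp [hu])]
        exact ins_succ' σ a u.succ (by simp [hu]; omega)
      rw [e1, e2, Fin.succ_lt_succ_iff]
      have g1 : σ (⟨j+1, by omega⟩ : Fin (n+1)) = σ u.succ := congrArg _ (Fin.ext (by simp [hu]))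
      have g2 : σ (⟨j, by omega⟩ : Fin (n+1)) = σ u.castSucc := congrArg _ (Fin.ext (by simp [hu]))
      rw [g1, g2] at hdes
      exact hdes

def validPos {n : ℕ} (σ : Equiv.Perm (Fin (n+1))) : Finset (Fin (n+2)) :=
  insert 0 ((Finset.univ.filter fun s : Fin n => σ s.succ < σ s.castSucc).image
    fun s : Fin n => s.succ.castSucc)

lemma mem_validPos {n : ℕ} (σ : Equiv.Perm (Fin (n+1))) (a : Fin (n+2)) :
    a ∈ validPos σ ↔ validCond σ a := by
  simp only [validPos, mem_insert, mem_image, mem_filter, mem_univ, true_and, validCond]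
  constructor
  · rintro (rfl | ⟨s, hdes, rfl⟩)
    · left; rfl
    · right
      exact ⟨(s:ℕ), by omega, by simp, hdes⟩
  · rintro (h0 | ⟨j, hj, hja, hdes⟩)
    · left; exact Fin.ext (by simp [h0])
    · right
      exact ⟨⟨j, by omega⟩, hdes, Fin.ext (by simp [hja])⟩

lemma asc_le {n : ℕ} (σ : Equiv.Perm (Fin (n+1))) : asc σ ≤ n := by
  have h := Finset.card_filter_le Finset.univ (fun s : Fin n => σ s.castSucc < σ s.succ)
  simpa [asc] using h

lemma card_validPos {n : ℕ} (σ : Equiv.Perm (Fin (n+1))) :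
    (validPos σ).card = n - asc σ + 1 := by
  rw [validPos, card_insert_of_notMem, card_image_of_injOn]
  · have h1 : (Finset.univ.filter fun s : Fin n => σ s.castSucc < σ s.succ).card
        + (Finset.univ.filter fun s : Fin n => ¬ σ s.castSucc < σ s.succ).card = n := by
      rw [Finset.card_filter_add_card_filter_not]
      simp
    have h2 : (Finset.univ.filter fun s : Fin n => ¬ σ s.castSucc < σ s.succ)
        = Finset.univ.filter fun s : Fin n => σ s.succ < σ s.castSucc := by
      apply Finset.filter_congr
      intro s _
      have hne : σ s.succ ≠ σ s.castSucc := fun h =>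
        absurd (σ.injective h) (Fin.castSucc_lt_succ : s.castSucc < s.succ).ne'
      constructor
      · intro h; exact lt_of_le_of_ne (not_lt.mp h) hne
      · intro h; exact not_lt_of_gt h
    rw [h2] at h1
    have : asc σ = (Finset.univ.filter fun s : Fin n => σ s.castSucc < σ s.succ).card := rfl
    omega
  · intro s₁ _ s₂ _ h
    apply Fin.ext
    have := congrArg Fin.val h
    simpa using this
  · intro hmem
    simp only [mem_image] at hmem
    obtain ⟨s, _, hs⟩ := hmem
    exact absurd (congrArg Fin.val hs) (by simp)

theorem card_RA (n k : ℕ) (hk : 1 ≤ k) :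
    (RA (n + 1) k).card = (n + 2 - k) * Btil n (k - 1) := by
  classical
  have key : ∀ π ∈ RA (n+1) k, del π ∈ (Qset n).filter fun σ => asc σ = k - 1 := by
    intro π hπ
    rw [RA, Finset.mem_filter] at hπ
    obtain ⟨hQ, hasc, hra⟩ := hπ
    have hπeq : ins (del π) (π⁻¹ 0) = π := ins_del π
    have hvc : validCond (del π) (π⁻¹ 0) :=
      (raCond_ins (del π) (π⁻¹ 0)).mp (by rw [hπeq]; exact hra)
    rw [Finset.mem_filter]
    constructor
    · exact (Qset_ins _ _ hvc).mp (by rw [hπeq]; exact hQ)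
    · have h := asc_ins (del π) (π⁻¹ 0) hvc
      rw [hπeq] at h
      omega
  rw [Finset.card_eq_sum_card_fiberwise key]
  have hfib : ∀ σ ∈ (Qset n).filter (fun σ => asc σ = k - 1),
      ((RA (n+1) k).filter fun π => del π = σ).card = n + 2 - k := by
    intro σ hσ
    rw [Finset.mem_filter] at hσ
    obtain ⟨hσQ, hσasc⟩ := hσ
    have hascle : asc σ ≤ n := asc_le σ
    have hcard : ((RA (n+1) k).filter fun π => del π = σ).card = (validPos σ).card := by
      apply Finset.card_bij' (fun π _ => π⁻¹ 0) (fun a _ => ins σ a)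
      · intro π hπ
        rw [Finset.mem_filter] at hπ
        obtain ⟨hπRA, hπdel⟩ := hπ
        rw [RA, Finset.mem_filter] at hπRA
        obtain ⟨_, _, hra⟩ := hπRA
        rw [mem_validPos]
        have hπeq : ins σ (π⁻¹ 0) = π := by rw [← hπdel]; exact ins_del π
        exact (raCond_ins σ (π⁻¹ 0)).mp (by rw [hπeq]; exact hra)
      · intro a haa
        rw [mem_validPos] at haa
        rw [Finset.mem_filter]
        refine ⟨?_, del_ins σ a⟩
        rw [RA, Finset.mem_filter]
        refine ⟨(Qset_ins σ a haa).mpr hσQ, ?_, (raCond_ins σ a).mpr haa⟩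
        rw [asc_ins σ a haa, hσasc]
        omega
      · intro π hπ
        rw [Finset.mem_filter] at hπ
        rw [← hπ.2]
        exact ins_del π
      · intro a _
        exact ins_inv_zero σ a
    rw [hcard, card_validPos, hσasc]
    omega
  rw [Finset.sum_congr rfl hfib, Finset.sum_const, smul_eq_mul, Btil, mul_comm]
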